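/- arXiv:2003.05930 — 2 statements merged into one kernel-verified Lean document; each statement's English description precedes it below -/
import Mathlib

section
/- The class Σ is a saturated right multiplicative system in Preglid FR: (i) Σ contains all identity morphisms and is closed under composition; (ii) for every f : Z → W and every s : Y → W with s ∈ Σ there exist g : X → Y and t : X → Z with t ∈ Σ and s∘g = f∘t; (iii) for all parallel morphisms f,g : X → Y and every s ∈ Σ with source Y such that s∘f = s∘g, there exists t ∈ Σ with target X such that f∘t = g∘t; and (iv) a morphism f of Preglid FR belongs to Σ if and only if Q(f) is an isomorphism in Glid FR. -/
set_option linter.unusedSectionVars false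
set_option maxHeartbeats 1000000
set_option synthInstance.maxHeartbeats 1000000
set_option maxHeartbeats 2000000

noncomputable section

open CategoryTheory CategoryTheory.Limits

universe u

namespace GliderPaper

/-- A `Γ`-filtration `FR` on a unital ring `R`: additive subgroups `F γ` with
`1 ∈ F 1`, monotone in `γ`, and multiplicative. -/
structure RingFiltration (Γ : Type u) [Group Γ] [PartialOrder Γ] (R : Type u) [Ring R] where
  F : Γ → AddSubgroup R
  one_mem : (1 : R) ∈ F 1
  mono : ∀ {α β : Γ}, α ≤ β → F α ≤ F β
  mul_mem : ∀ {α β : Γ} {a b : R}, a ∈ F α → b ∈ F β → a * b ∈ F (α * β)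

variable {Γ : Type u} [Group Γ] [PartialOrder Γ]
  [CovariantClass Γ Γ (· * ·) (· ≤ ·)] [CovariantClass Γ Γ (Function.swap (· * ·)) (· ≤ ·)]
  {R : Type u} [Ring R]

/-- Objects of the extended filtered companion category `oFF_Λ R`:
the disjoint union `Λ ⊔ {∞}`. -/
inductive OFF (FR : RingFiltration Γ R) (Λ : Set Γ) : Type u
  | of (α : Λ)
  | infty

/-- Objects of the filtered companion category `FF_Λ R`: the set `Λ`. -/
inductive FF (FR : RingFiltration Γ R) (Λ : Set Γ) : Type u
  | of (α : Λ)

variable (FR : RingFiltration Γ R) (Λ : Set Γ)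

namespace OFF

/-- `le X Y` holds iff the canonical morphism `1_{X,Y}` is defined, i.e. `X ≤ Y` in `Λ`,
or `Y = ∞`. -/
def le : OFF FR Λ → OFF FR Λ → Prop
  | of α, of β => (α : Γ) ≤ (β : Γ)
  | _, infty => True
  | infty, of _ => False

open scoped Classical in
/-- The additive subgroup of `R` of morphisms `X ⟶ Y` in `oFF_Λ R`:
`Hom(α,β) = F_{βα⁻¹}R` for `α ≤ β` in `Λ`, `Hom(X,∞) = R`, and `0` otherwise. -/
noncomputable def homGrp : OFF FR Λ → OFF FR Λ → AddSubgroup R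
  | of α, of β => if (α : Γ) ≤ (β : Γ) then FR.F ((β : Γ) * (α : Γ)⁻¹) else ⊥
  | _, infty => ⊤
  | infty, of _ => ⊥

theorem le_refl' : ∀ X : OFF FR Λ, le FR Λ X X
  | of _ => _root_.le_refl _
  | infty => trivial

theorem one_mem_homGrp : ∀ {X Y : OFF FR Λ}, le FR Λ X Y → (1 : R) ∈ homGrp FR Λ X Y
  | of α, of β, h => by
      have h' : (α : Γ) ≤ (β : Γ) := h
      have h1 : (1 : Γ) ≤ (β : Γ) * (α : Γ)⁻¹ := by
        rw [← mul_inv_cancel (α : Γ)]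
        exact mul_le_mul_left h' _
      simpa [homGrp, if_pos h'] using FR.mono h1 FR.one_mem
  | of _, infty, _ => trivial
  | infty, infty, _ => trivial
  | infty, of _, h => h.elim

theorem mul_mem_homGrp : ∀ {X Y Z : OFF FR Λ} {f g : R},
    f ∈ homGrp FR Λ X Y → g ∈ homGrp FR Λ Y Z → g * f ∈ homGrp FR Λ X Z := by
  intro X Y Z f g hf hg
  cases X <;> cases Y <;> cases Z <;> simp only [homGrp] at hf hg ⊢ <;> try trivial
  case of.of.of a b c =>
    by_cases hab : (a : Γ) ≤ (b : Γ)
    · by_cases hbc : (b : Γ) ≤ (c : Γ)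
      · rw [if_pos hab] at hf
        rw [if_pos hbc] at hg
        rw [if_pos (le_trans hab hbc)]
        have := FR.mul_mem hg hf
        rwa [show (c : Γ) * (b : Γ)⁻¹ * ((b : Γ) * (a : Γ)⁻¹) = (c : Γ) * (a : Γ)⁻¹ by
          group] at this
      · rw [if_neg hbc] at hg
        rw [AddSubgroup.mem_bot] at hg
        subst hg
        simp only [zero_mul]
        exact AddSubgroup.zero_mem _
    · rw [if_neg hab] at hf
      rw [AddSubgroup.mem_bot] at hf
      subst hf
      simp only [mul_zero]
      exact AddSubgroup.zero_mem _
  case of.infty.of a c =>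
    rw [AddSubgroup.mem_bot] at hg
    subst hg
    simp only [zero_mul]
    exact AddSubgroup.zero_mem _
  case infty.of.of b c =>
    rw [AddSubgroup.mem_bot] at hf
    subst hf
    simp only [mul_zero]
    exact AddSubgroup.zero_mem _
  case infty.infty.of c =>
    rw [AddSubgroup.mem_bot] at hg
    subst hg
    simp only [zero_mul]
    exact AddSubgroup.zero_mem _

instance : Category (OFF FR Λ) where
  Hom X Y := homGrp FR Λ X Y
  id X := ⟨1, one_mem_homGrp FR Λ (le_refl' FR Λ X)⟩
  comp f g := ⟨g.1 * f.1, mul_mem_homGrp FR Λ f.2 g.2⟩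
  id_comp f := Subtype.ext (mul_one f.1)
  comp_id f := Subtype.ext (one_mul f.1)
  assoc f g h := Subtype.ext (mul_assoc h.1 g.1 f.1).symm

instance : Preadditive (OFF FR Λ) where
  homGroup X Y := inferInstanceAs (AddCommGroup (homGrp FR Λ X Y))
  add_comp _ _ _ f f' g := Subtype.ext (mul_add g.1 f.1 f'.1)
  comp_add _ _ _ f g g' := Subtype.ext (add_mul g.1 g'.1 f.1)

end OFF

namespace FF

/-- The inclusion of the objects of `FF_Λ R` into those of `oFF_Λ R`. -/
def toOFF : FF FR Λ → OFF FR Λ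
  | of α => .of α

instance : Category (FF FR Λ) where
  Hom X Y := OFF.homGrp FR Λ (toOFF FR Λ X) (toOFF FR Λ Y)
  id X := ⟨1, OFF.one_mem_homGrp FR Λ (OFF.le_refl' FR Λ _)⟩
  comp f g := ⟨g.1 * f.1, OFF.mul_mem_homGrp FR Λ f.2 g.2⟩
  id_comp f := Subtype.ext (mul_one f.1)
  comp_id f := Subtype.ext (one_mul f.1)
  assoc f g h := Subtype.ext (mul_assoc h.1 g.1 f.1).symm

instance : Preadditive (FF FR Λ) where
  homGroup X Y := inferInstanceAs (AddCommGroup (OFF.homGrp FR Λ (toOFF FR Λ X) (toOFF FR Λ Y)))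
  add_comp _ _ _ f f' g := Subtype.ext (mul_add g.1 f.1 f'.1)
  comp_add _ _ _ f g g' := Subtype.ext (add_mul g.1 g'.1 f.1)

end FF

/-- The inclusion functor `j : FF_Λ R ⥤ oFF_Λ R`. -/
def jF : FF FR Λ ⥤ OFF FR Λ where
  obj := FF.toOFF FR Λ
  map f := f
  map_id _ := rfl
  map_comp _ _ := rfl

instance : (jF FR Λ).Additive := ⟨rfl⟩

/-- `Mod C`: the category of additive functors from `C` to abelian groups. -/
abbrev Mod (C : Type u) [Category.{u} C] [Preadditive C] : Type (u + 1) :=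
  C ⥤+ AddCommGrpCat.{u}

/-- The component at `X` of a morphism in `Mod C`. -/
def mapp {C : Type u} [Category.{u} C] [Preadditive C] {M N : Mod C} (f : M ⟶ N) (X : C) :
    M.obj.obj X ⟶ N.obj.obj X :=
  (show M.obj ⟶ N.obj from f.hom).app X

/-- The canonical morphism `1_{X,Y}` in `oFF_Λ R`, given by `1_R`. -/
def unitHom (X Y : OFF FR Λ) (h : OFF.le FR Λ X Y) : X ⟶ Y :=
  ⟨1, OFF.one_mem_homGrp FR Λ h⟩

/-- The canonical morphism `1_{α,β}` in `FF_Λ R`, given by `1_R`. -/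
def unitHomFF (α β : Λ) (h : (α : Γ) ≤ (β : Γ)) : (FF.of α : FF FR Λ) ⟶ FF.of β :=
  unitHom FR Λ (.of α) (.of β) h

/-- A module `M` over `oFF_Λ R` is a preglider if all the maps `M(1_{X,Y})` are injective. -/
def IsPreglider (M : Mod (OFF FR Λ)) : Prop :=
  ∀ (X Y : OFF FR Λ) (h : OFF.le FR Λ X Y), Function.Injective (M.obj.map (unitHom FR Λ X Y h))

/-- A module `M` over `FF_Λ R` is a prefragment if all the maps `M(1_{α,β})` are injective. -/
def IsPrefragment (M : Mod (FF FR Λ)) : Prop :=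
  ∀ (α β : Λ) (h : (α : Γ) ≤ (β : Γ)), Function.Injective (M.obj.map (unitHomFF FR Λ α β h))

/-- The category of pregliders: the full subcategory of `Mod (oFF_Λ R)` of pregliders. -/
abbrev Preglid : Type (u + 1) :=
  ObjectProperty.FullSubcategory (fun M : Mod (OFF FR Λ) => IsPreglider FR Λ M)

instance : Preadditive (Preglid FR Λ) := Preadditive.inducedCategory _

/-- The category of prefragments: the full subcategory of `Mod (FF_Λ R)` of prefragments. -/
abbrev Prefrag : Type (u + 1) :=
  ObjectProperty.FullSubcategory (fun M : Mod (FF FR Λ) => IsPrefragment FR Λ M)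

instance : Preadditive (Prefrag FR Λ) := Preadditive.inducedCategory _

/-- The inclusion `Preglid FR Λ ⥤ Mod (oFF_Λ R)`. -/
def iotaF : Preglid FR Λ ⥤ Mod (OFF FR Λ) := ObjectProperty.ι _

/-- The inclusion `Prefrag FR Λ ⥤ Mod (FF_Λ R)`. -/
def etaF : Prefrag FR Λ ⥤ Mod (FF FR Λ) := ObjectProperty.ι _

/-- The component at `X` of a morphism of pregliders. -/
def pgapp {M N : Preglid FR Λ} (f : M ⟶ N) (X : OFF FR Λ) :
    M.obj.obj.obj X ⟶ N.obj.obj.obj X :=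
  mapp (show M.obj ⟶ N.obj from f.hom) X

/-- The component at `X` of a morphism of prefragments. -/
def pfapp {M N : Prefrag FR Λ} (f : M ⟶ N) (X : FF FR Λ) :
    M.obj.obj.obj X ⟶ N.obj.obj.obj X :=
  mapp (show M.obj ⟶ N.obj from f.hom) X

/-- The class `Σ` of morphisms of pregliders all of whose components at objects of `Λ`
are isomorphisms. -/
def SigmaClass : MorphismProperty (Preglid FR Λ) :=
  fun _ _ f => ∀ α : Λ, IsIso (pgapp FR Λ f (.of α))

/-- The category of glider representations: the localization of `Preglid FR Λ` at `Σ`. -/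
abbrev Glid : Type (u + 1) := (SigmaClass FR Λ).Localization

/-- The localization functor `Q : Preglid FR Λ ⥤ Glid FR Λ`. -/
def QF : Preglid FR Λ ⥤ Glid FR Λ := (SigmaClass FR Λ).Q

/-- The restriction functor `j^* : Mod (oFF_Λ R) ⥤ Mod (FF_Λ R)`. -/
def jStar : Mod (OFF FR Λ) ⥤ Mod (FF FR Λ) where
  obj M := ⟨jF FR Λ ⋙ M.obj, by haveI : M.obj.Additive := M.property; exact (inferInstance : (jF FR Λ ⋙ M.obj).Additive)⟩
  map {M N} f := ⟨Functor.whiskerLeft (jF FR Λ) (show M.obj ⟶ N.obj from f.hom)⟩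
  map_id _ := rfl
  map_comp _ _ := rfl

theorem isPrefragment_jStar (M : Mod (OFF FR Λ)) (hM : IsPreglider FR Λ M) :
    IsPrefragment FR Λ ((jStar FR Λ).obj M) :=
  fun α β h => hM (.of α) (.of β) h

/-- The restriction functor `j^* : Preglid FR Λ ⥤ Prefrag FR Λ`. -/
def jRes : Preglid FR Λ ⥤ Prefrag FR Λ where
  obj M := ⟨(jStar FR Λ).obj M.obj, isPrefragment_jStar FR Λ M.obj M.property⟩
  map f := ⟨(jStar FR Λ).map f.hom⟩
  map_id M := InducedCategory.hom_ext ((jStar FR Λ).map_id M.obj)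
  map_comp f g := InducedCategory.hom_ext ((jStar FR Λ).map_comp f.hom g.hom)

theorem sigma_isInvertedBy : (SigmaClass FR Λ).IsInvertedBy (jRes FR Λ) := by
  intro M N f hf
  haveI : (AdditiveFunctor.forget (FF FR Λ) AddCommGrpCat.{u}).Faithful :=
    ObjectProperty.faithful_ι _
  haveI : ∀ X : FF FR Λ, IsIso
      (((ObjectProperty.ι (fun M : Mod (FF FR Λ) => IsPrefragment FR Λ M) ⋙
        AdditiveFunctor.forget _ _).map ((jRes FR Λ).map f)).app X) := by
    rintro ⟨α⟩
    exact hf α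
  haveI : IsIso ((ObjectProperty.ι (fun M : Mod (FF FR Λ) => IsPrefragment FR Λ M) ⋙
      AdditiveFunctor.forget _ _).map ((jRes FR Λ).map f)) :=
    NatIso.isIso_of_isIso_app _
  exact isIso_of_reflects_iso ((jRes FR Λ).map f)
    (ObjectProperty.ι (fun M : Mod (FF FR Λ) => IsPrefragment FR Λ M) ⋙
      AdditiveFunctor.forget _ _)

/-- The canonical fully faithful functor `φ : Glid FR Λ ⥤ Prefrag FR Λ`,
the unique functor with `Q ⋙ φ = j^*`. -/
def phiF : Glid FR Λ ⥤ Prefrag FR Λ :=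
  Localization.Construction.lift (jRes FR Λ) (sigma_isInvertedBy FR Λ)

theorem phiF_fac : QF FR Λ ⋙ phiF FR Λ = jRes FR Λ :=
  Localization.Construction.fac _ _



section Aux

variable {Γ : Type u} [Group Γ] [PartialOrder Γ]
  [CovariantClass Γ Γ (· * ·) (· ≤ ·)] [CovariantClass Γ Γ (Function.swap (· * ·)) (· ≤ ·)]
  {R : Type u} [Ring R] {FR : RingFiltration Γ R} {Λ : Set Γ}

/-- A pointwise subfunctor of a module over `oFF_Λ R`. -/
def subFun (M : Mod (OFF FR Λ)) (S : ∀ U : OFF FR Λ, AddSubgroup (M.obj.obj U))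
    (hS : ∀ {U V : OFF FR Λ} (r : U ⟶ V) (x : M.obj.obj U), x ∈ S U → M.obj.map r x ∈ S V) :
    Mod (OFF FR Λ) where
  obj :=
    { obj := fun U => AddCommGrpCat.of (S U)
      map := fun {U V} r =>
        AddCommGrpCat.ofHom (AddMonoidHom.codRestrict ((M.obj.map r).hom.comp (S U).subtype) (S V)
          (fun x => hS r x.1 x.2))
      map_id := fun U => by
        apply AddCommGrpCat.hom_ext
        apply AddMonoidHom.ext
        intro x
        apply Subtype.ext
        show M.obj.map (𝟙 U) x.1 = x.1
        rw [M.obj.map_id]; rfl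
      map_comp := fun {U V W'} r r' => by
        apply AddCommGrpCat.hom_ext
        apply AddMonoidHom.ext
        intro x
        apply Subtype.ext
        show M.obj.map (r ≫ r') x.1 = M.obj.map r' (M.obj.map r x.1)
        rw [M.obj.map_comp]; rfl }
  property := by
    haveI := M.property
    constructor
    intro U V r r'
    apply AddCommGrpCat.hom_ext
    apply AddMonoidHom.ext
    intro x
    apply Subtype.ext
    show M.obj.map (r + r') x.1 = M.obj.map r x.1 + M.obj.map r' x.1
    rw [M.obj.map_add]; rfl

theorem subFun_preglider (M : Mod (OFF FR Λ)) (S : ∀ U : OFF FR Λ, AddSubgroup (M.obj.obj U))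
    (hS : ∀ {U V : OFF FR Λ} (r : U ⟶ V) (x : M.obj.obj U), x ∈ S U → M.obj.map r x ∈ S V)
    (hM : IsPreglider FR Λ M) : IsPreglider FR Λ (subFun M S hS) := by
  intro U V h a b hab
  apply Subtype.ext
  apply hM U V h
  show M.obj.map (unitHom FR Λ U V h) a.1 = M.obj.map (unitHom FR Λ U V h) b.1
  exact congrArg Subtype.val hab

/-- The pointwise product of two modules over `oFF_Λ R`. -/
def prodFun (M N : Mod (OFF FR Λ)) : Mod (OFF FR Λ) where
  obj :=
    { obj := fun U => AddCommGrpCat.of (M.obj.obj U × N.obj.obj U)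
      map := fun {U V} r => AddCommGrpCat.ofHom (AddMonoidHom.prodMap (M.obj.map r).hom (N.obj.map r).hom)
      map_id := fun U => by
        apply AddCommGrpCat.hom_ext
        apply AddMonoidHom.ext
        intro x
        refine Prod.ext ?_ ?_
        · show M.obj.map (𝟙 U) x.1 = x.1
          rw [M.obj.map_id]; rfl
        · show N.obj.map (𝟙 U) x.2 = x.2
          rw [N.obj.map_id]; rfl
      map_comp := fun {U V W'} r r' => by
        apply AddCommGrpCat.hom_ext
        apply AddMonoidHom.ext
        intro x
        refine Prod.ext ?_ ?_
        · show M.obj.map (r ≫ r') x.1 = M.obj.map r' (M.obj.map r x.1)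
          rw [M.obj.map_comp]; rfl
        · show N.obj.map (r ≫ r') x.2 = N.obj.map r' (N.obj.map r x.2)
          rw [N.obj.map_comp]; rfl }
  property := by
    haveI := M.property
    haveI := N.property
    constructor
    intro U V r r'
    apply AddCommGrpCat.hom_ext
    apply AddMonoidHom.ext
    intro x
    refine Prod.ext ?_ ?_
    · show M.obj.map (r + r') x.1 = M.obj.map r x.1 + M.obj.map r' x.1
      rw [M.obj.map_add]; rfl
    · show N.obj.map (r + r') x.2 = N.obj.map r x.2 + N.obj.map r' x.2
      rw [N.obj.map_add]; rfl

theorem prodFun_preglider (M N : Mod (OFF FR Λ)) (hM : IsPreglider FR Λ M)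
    (hN : IsPreglider FR Λ N) : IsPreglider FR Λ (prodFun M N) := by
  intro U V h a b hab
  exact Prod.ext (hM U V h (congrArg Prod.fst hab)) (hN U V h (congrArg Prod.snd hab))

variable {Zo Wo Yo : Preglid FR Λ}

/-- The pointwise pullback subgroup. -/
def oreS (f : Zo ⟶ Wo) (s : Yo ⟶ Wo) (U : OFF FR Λ) :
    AddSubgroup ((prodFun Zo.obj Yo.obj).obj.obj U) :=
  AddMonoidHom.ker
    (((pgapp FR Λ f U).hom.comp (AddMonoidHom.fst _ _)) -
     ((pgapp FR Λ s U).hom.comp (AddMonoidHom.snd _ _)))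

theorem mem_oreS (f : Zo ⟶ Wo) (s : Yo ⟶ Wo) (U : OFF FR Λ)
    (x : (prodFun Zo.obj Yo.obj).obj.obj U) :
    x ∈ oreS f s U ↔ pgapp FR Λ f U x.1 = pgapp FR Λ s U x.2 := by
  rw [oreS, AddMonoidHom.mem_ker]
  exact sub_eq_zero (a := pgapp FR Λ f U x.1) (b := pgapp FR Λ s U x.2)

theorem oreS_stable (f : Zo ⟶ Wo) (s : Yo ⟶ Wo) {U V : OFF FR Λ} (r : U ⟶ V)
    (x : (prodFun Zo.obj Yo.obj).obj.obj U) (hx : x ∈ oreS f s U) :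
    (prodFun Zo.obj Yo.obj).obj.map r x ∈ oreS f s V := by
  rw [mem_oreS] at hx ⊢
  have hfn := ConcreteCategory.congr_hom
    (f.hom.hom.naturality r) x.1
  have hsn := ConcreteCategory.congr_hom
    (s.hom.hom.naturality r) x.2
  show pgapp FR Λ f V (Zo.obj.obj.map r x.1) = pgapp FR Λ s V (Yo.obj.obj.map r x.2)
  calc pgapp FR Λ f V (Zo.obj.obj.map r x.1)
      = Wo.obj.obj.map r (pgapp FR Λ f U x.1) := hfn
    _ = Wo.obj.obj.map r (pgapp FR Λ s U x.2) := by rw [hx]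
    _ = pgapp FR Λ s V (Yo.obj.obj.map r x.2) := hsn.symm

/-- The pullback module of a cospan `f : Z ⟶ W`, `s : Y ⟶ W` of pregliders. -/
def oreObj (f : Zo ⟶ Wo) (s : Yo ⟶ Wo) : Mod (OFF FR Λ) :=
  subFun (prodFun Zo.obj Yo.obj) (oreS f s) (fun r x hx => oreS_stable f s r x hx)

theorem oreObj_preglider (f : Zo ⟶ Wo) (s : Yo ⟶ Wo) : IsPreglider FR Λ (oreObj f s) :=
  subFun_preglider _ _ _ (prodFun_preglider _ _ Zo.property Yo.property)

/-- The first projection of the pullback. -/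
def oreFst (f : Zo ⟶ Wo) (s : Yo ⟶ Wo) : (oreObj f s).obj ⟶ Zo.obj.obj where
  app U := AddCommGrpCat.ofHom ((AddMonoidHom.fst (Zo.obj.obj.obj U) (Yo.obj.obj.obj U)).comp (oreS f s U).subtype)
  naturality := by
    intro U V r
    apply AddCommGrpCat.hom_ext
    apply AddMonoidHom.ext
    intro x
    rfl

/-- The second projection of the pullback. -/
def oreSnd (f : Zo ⟶ Wo) (s : Yo ⟶ Wo) : (oreObj f s).obj ⟶ Yo.obj.obj where
  app U := AddCommGrpCat.ofHom ((AddMonoidHom.snd (Zo.obj.obj.obj U) (Yo.obj.obj.obj U)).comp (oreS f s U).subtype)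
  naturality := by
    intro U V r
    apply AddCommGrpCat.hom_ext
    apply AddMonoidHom.ext
    intro x
    rfl

/-- The `∞`-truncation subgroups used for right cancellability. -/
def truncS (X : Preglid FR Λ) : ∀ U : OFF FR Λ, AddSubgroup (X.obj.obj.obj U)
  | .of _ => ⊤
  | .infty => ⨆ σ : (α : Λ) × ((OFF.of α : OFF FR Λ) ⟶ OFF.infty),
      (X.obj.obj.map σ.2).hom.range

theorem truncS_stable (X : Preglid FR Λ) {U V : OFF FR Λ} (r : U ⟶ V)
    (x : X.obj.obj.obj U) (hx : x ∈ truncS X U) : X.obj.obj.map r x ∈ truncS X V := by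
  cases V with
  | of β => exact AddSubgroup.mem_top _
  | infty =>
    cases U with
    | of α =>
      exact le_iSup (fun σ : (α : Λ) × ((OFF.of α : OFF FR Λ) ⟶ OFF.infty) =>
        (X.obj.obj.map σ.2).hom.range) ⟨α, r⟩ ⟨x, rfl⟩
    | infty =>
      have hle : (truncS X OFF.infty).map (X.obj.obj.map r).hom ≤ truncS X OFF.infty := by
        show AddSubgroup.map _ (⨆ σ : (α : Λ) × ((OFF.of α : OFF FR Λ) ⟶ OFF.infty),
          (X.obj.obj.map σ.2).hom.range) ≤ _
        rw [AddSubgroup.map_iSup]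
        apply iSup_le
        intro σ
        rw [← AddMonoidHom.range_comp]
        have hcomp : ((X.obj.obj.map r).hom.comp (X.obj.obj.map σ.2).hom).range =
            (X.obj.obj.map (σ.2 ≫ r)).hom.range := by
          rw [X.obj.obj.map_comp]; rfl
        rw [hcomp]
        exact le_iSup (fun σ : (α : Λ) × ((OFF.of α : OFF FR Λ) ⟶ OFF.infty) =>
          (X.obj.obj.map σ.2).hom.range) ⟨σ.1, σ.2 ≫ r⟩
      exact hle (AddSubgroup.mem_map_of_mem _ hx)

/-- The `∞`-truncation of a preglider. -/
def truncObj (X : Preglid FR Λ) : Mod (OFF FR Λ) :=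
  subFun X.obj (truncS X) (fun r x hx => truncS_stable X r x hx)

/-- The inclusion of the truncation. -/
def truncIncl (X : Preglid FR Λ) : (truncObj X).obj ⟶ X.obj.obj where
  app U := AddCommGrpCat.ofHom (truncS X U).subtype
  naturality := by
    intro U V r
    apply AddCommGrpCat.hom_ext
    apply AddMonoidHom.ext
    intro x
    rfl

end Aux

section Statements

variable {Γ : Type u} [Group Γ] [PartialOrder Γ]
  [CovariantClass Γ Γ (· * ·) (· ≤ ·)] [CovariantClass Γ Γ (Function.swap (· * ·)) (· ≤ ·)]
  {R : Type u} [Ring R]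

/-- The class `Σ` is a saturated right multiplicative system in
`Preglid FR`: (i) it contains identities and is closed under composition; (ii) the right
Ore condition holds; (iii) the right cancellability condition holds; (iv) `f ∈ Σ` if and
only if `Q(f)` is an isomorphism in `Glid FR`. -/
theorem statement_1 (FR : RingFiltration Γ R) (Λ : Set Γ) :
    -- (i) identities and composition
    (∀ X : Preglid FR Λ, SigmaClass FR Λ (𝟙 X)) ∧
    (∀ {X Y Z : Preglid FR Λ} (f : X ⟶ Y) (g : Y ⟶ Z),
      SigmaClass FR Λ f → SigmaClass FR Λ g → SigmaClass FR Λ (f ≫ g)) ∧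
    -- (ii) right Ore condition: every cospan `Z ⟶ W ⟵ Y` with `s : Y ⟶ W` in `Σ` can be
    -- completed to a commutative square with `t : X ⟶ Z` in `Σ`
    (∀ {Z W Y : Preglid FR Λ} (f : Z ⟶ W) (s : Y ⟶ W), SigmaClass FR Λ s →
      ∃ (X : Preglid FR Λ) (g : X ⟶ Y) (t : X ⟶ Z),
        SigmaClass FR Λ t ∧ g ≫ s = t ≫ f) ∧
    -- (iii) right cancellability
    (∀ {X Y Y' : Preglid FR Λ} (f g : X ⟶ Y) (s : Y ⟶ Y'), SigmaClass FR Λ s →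
      f ≫ s = g ≫ s →
      ∃ (X' : Preglid FR Λ) (t : X' ⟶ X), SigmaClass FR Λ t ∧ t ≫ f = t ≫ g) ∧
    -- (iv) saturation
    (∀ {X Y : Preglid FR Λ} (f : X ⟶ Y),
      SigmaClass FR Λ f ↔ IsIso ((QF FR Λ).map f)) := by
  classical
  refine ⟨?_, ?_, ?_, ?_, ?_⟩
  · -- identities
    intro X α
    exact (inferInstance : IsIso (𝟙 (X.obj.obj.obj (OFF.of α))))
  · -- composition
    intro X Y Z f g hf hg α
    haveI := hf α
    haveI := hg α
    exact (inferInstance : IsIso (pgapp FR Λ f (OFF.of α) ≫ pgapp FR Λ g (OFF.of α)))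
  · -- right Ore condition
    intro Zo Wo Yo f s hs
    refine ⟨⟨oreObj f s, oreObj_preglider f s⟩, ⟨⟨oreSnd f s⟩⟩, ⟨⟨oreFst f s⟩⟩, ?_, ?_⟩
    · intro α
      haveI := hs α
      have hsb : Function.Bijective (pgapp FR Λ s (OFF.of α)) :=
        (ConcreteCategory.isIso_iff_bijective _).mp (hs α)
      rw [ConcreteCategory.isIso_iff_bijective]
      constructor
      · intro a b hab
        apply Subtype.ext
        have h1 : a.1.1 = b.1.1 := hab
        refine Prod.ext h1 ?_
        apply hsb.injective
        have ha := (mem_oreS f s _ a.1).mp a.2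
        have hb := (mem_oreS f s _ b.1).mp b.2
        rw [← ha, ← hb, h1]
      · intro z
        have hz : pgapp FR Λ s (OFF.of α)
            (inv (pgapp FR Λ s (OFF.of α)) (pgapp FR Λ f (OFF.of α) z)) =
            pgapp FR Λ f (OFF.of α) z := by
          rw [← CategoryTheory.comp_apply, IsIso.inv_hom_id]
          rfl
        refine ⟨⟨(z, inv (pgapp FR Λ s (OFF.of α)) (pgapp FR Λ f (OFF.of α) z)), ?_⟩, rfl⟩
        exact (mem_oreS f s _ _).mpr hz.symm
    · apply InducedCategory.hom_ext
      apply InducedCategory.hom_ext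
      apply NatTrans.ext
      funext U
      apply AddCommGrpCat.hom_ext
      apply AddMonoidHom.ext
      intro x
      show pgapp FR Λ s U x.1.2 = pgapp FR Λ f U x.1.1
      exact ((mem_oreS f s U x.1).mp x.2).symm
  · -- right cancellability
    intro X Y Y' f g s hs hfg
    have hlam : ∀ (α : Λ) (w : X.obj.obj.obj (OFF.of α)),
        pgapp FR Λ f (OFF.of α) w = pgapp FR Λ g (OFF.of α) w := by
      intro α w
      have hbs : Function.Bijective (pgapp FR Λ s (OFF.of α)) :=
        (ConcreteCategory.isIso_iff_bijective _).mp (hs α)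
      apply hbs.injective
      have h1 : pgapp FR Λ f (OFF.of α) ≫ pgapp FR Λ s (OFF.of α) =
          pgapp FR Λ g (OFF.of α) ≫ pgapp FR Λ s (OFF.of α) :=
        congrArg (fun h => pgapp FR Λ h (OFF.of α)) hfg
      show pgapp FR Λ s (OFF.of α) (pgapp FR Λ f (OFF.of α) w) =
        pgapp FR Λ s (OFF.of α) (pgapp FR Λ g (OFF.of α) w)
      rw [← CategoryTheory.comp_apply, ← CategoryTheory.comp_apply, h1]
    refine ⟨⟨truncObj X, subFun_preglider _ _ _ X.property⟩, ⟨⟨truncIncl X⟩⟩, ?_, ?_⟩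
    · intro α
      rw [ConcreteCategory.isIso_iff_bijective]
      constructor
      · intro a b hab
        exact Subtype.ext hab
      · intro z
        exact ⟨⟨z, AddSubgroup.mem_top z⟩, rfl⟩
    · apply InducedCategory.hom_ext
      apply InducedCategory.hom_ext
      apply NatTrans.ext
      funext U
      apply AddCommGrpCat.hom_ext
      apply AddMonoidHom.ext
      intro x
      cases U with
      | of α =>
        exact hlam α x.1
      | infty =>
        show pgapp FR Λ f OFF.infty x.1 = pgapp FR Λ g OFF.infty x.1
        have hker : truncS X OFF.infty ≤ AddMonoidHom.ker
            ((pgapp FR Λ f OFF.infty).hom - (pgapp FR Λ g OFF.infty).hom) := by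
          apply iSup_le
          intro σ
          rintro w ⟨v, rfl⟩
          rw [AddMonoidHom.mem_ker, AddMonoidHom.sub_apply, sub_eq_zero]
          have hnf := ConcreteCategory.congr_hom
            (f.hom.hom.naturality σ.2) v
          have hng := ConcreteCategory.congr_hom
            (g.hom.hom.naturality σ.2) v
          show pgapp FR Λ f OFF.infty (X.obj.obj.map σ.2 v) =
            pgapp FR Λ g OFF.infty (X.obj.obj.map σ.2 v)
          calc pgapp FR Λ f OFF.infty (X.obj.obj.map σ.2 v)
              = Y.obj.obj.map σ.2 (pgapp FR Λ f (OFF.of σ.1) v) := hnf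
            _ = Y.obj.obj.map σ.2 (pgapp FR Λ g (OFF.of σ.1) v) := by rw [hlam σ.1 v]
            _ = pgapp FR Λ g OFF.infty (X.obj.obj.map σ.2 v) := hng.symm
        have hx := hker x.2
        rw [AddMonoidHom.mem_ker, AddMonoidHom.sub_apply, sub_eq_zero] at hx
        exact hx
  · -- saturation
    intro X Y f
    constructor
    · intro hf
      exact (SigmaClass FR Λ).Q_inverts f hf
    · intro hQ
      have hjres : IsIso ((jRes FR Λ).map f) := by
        have h := Functor.congr_hom (phiF_fac FR Λ).symm f
        rw [h]
        haveI : IsIso ((QF FR Λ ⋙ phiF FR Λ).map f) := by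
          show IsIso ((phiF FR Λ).map ((QF FR Λ).map f))
          infer_instance
        infer_instance
      intro α
      haveI : IsIso ((ObjectProperty.ι
          (fun M : Mod (FF FR Λ) => IsPrefragment FR Λ M) ⋙
          AdditiveFunctor.forget _ _).map ((jRes FR Λ).map f)) :=
        Functor.map_isIso _ _
      haveI : IsIso (((ObjectProperty.ι
          (fun M : Mod (FF FR Λ) => IsPrefragment FR Λ M) ⋙
          AdditiveFunctor.forget _ _).map ((jRes FR Λ).map f)).app (FF.of α)) :=
        inferInstance
      exact this


end Statements

end GliderPaper
end
end

section
/- Let C be a deflation quasi-abelian category. Then every morphism f : X → Y in C factors as f = i∘d, where d : X → coim f is the canonical cokernel map of ker f → X (so d is a cokernel, hence a deflation) and i : coim f → Y is a monomorphism. -/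
open CategoryTheory CategoryTheory.Limits

universe v u

namespace GliderPaper

/-- Let `C` be a deflation quasi-abelian category: a pre-abelian
category (an additive category with kernels and cokernels) in which cokernels are
stable under pullback (the pullback of a morphism that is a cokernel -- i.e. a normal
epimorphism -- along any morphism is again a cokernel).  Then every morphism
`f : X ⟶ Y` factors as `f = d ≫ i`, where `d : X ⟶ coim f` is the canonical cokernel
map of `ker f → X` (hence a deflation) and `i : coim f ⟶ Y` (the morphism induced by
the universal property of the cokernel) is a monomorphism. -/
theorem statement_15 {C : Type u} [Category.{v} C] [Preadditive C] [HasFiniteProducts C]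
    [HasKernels C] [HasCokernels C]
    (hpb : ∀ {P X Y Z : C} (fst : P ⟶ X) (snd : P ⟶ Y) (f : X ⟶ Z) (g : Y ⟶ Z),
      IsPullback fst snd f g → Nonempty (NormalEpi g) → Nonempty (NormalEpi fst))
    {X Y : C} (f : X ⟶ Y) :
    cokernel.π (kernel.ι f) ≫ cokernel.desc (kernel.ι f) f (kernel.condition f) = f ∧
    Mono (cokernel.desc (kernel.ι f) f (kernel.condition f)) := by
  have : HasEqualizers C := Preadditive.hasEqualizers_of_hasKernels
  have : HasPullbacks C := hasPullbacks_of_hasBinaryProducts_of_hasEqualizers C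
  refine ⟨cokernel.π_desc _ _ _, ?_⟩
  set p := cokernel.π (kernel.ι f)
  set i := cokernel.desc (kernel.ι f) f (kernel.condition f)
  -- kernel of i
  set k := kernel.ι i
  -- pullback of p along k
  have hPB : IsPullback (pullback.fst k p) (pullback.snd k p) k p :=
    IsPullback.of_hasPullback k p
  have hne : Nonempty (NormalEpi p) :=
    ⟨⟨_, kernel.ι f, cokernel.condition _, cokernelIsCokernel _⟩⟩
  obtain ⟨ne⟩ := hpb _ _ _ _ hPB hne
  haveI : RegularEpi (pullback.fst k p) := @NormalEpi.regularEpi _ _ _ _ _ _ ne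
  have hepi : Epi (pullback.fst k p) := inferInstance
  -- pullback.snd ≫ f = 0
  have h1 : pullback.snd k p ≫ f = 0 := by
    calc pullback.snd k p ≫ f = pullback.snd k p ≫ p ≫ i := by
          rw [cokernel.π_desc]
      _ = (pullback.fst k p ≫ k) ≫ i := by rw [← Category.assoc, pullback.condition]
      _ = 0 := by rw [Category.assoc, kernel.condition, comp_zero]
  -- factor pullback.snd through kernel f
  obtain ⟨t, ht⟩ : ∃ t, t ≫ kernel.ι f = pullback.snd k p :=
    ⟨kernel.lift f (pullback.snd k p) h1, kernel.lift_ι _ _ _⟩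
  have h2 : pullback.fst k p ≫ k = 0 := by
    rw [pullback.condition, ← ht, Category.assoc]
    simp [p]
  have hk : k = 0 := by
    rw [← cancel_epi (pullback.fst k p), h2, comp_zero]
  exact Preadditive.mono_of_kernel_zero hk

end GliderPaper
end
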